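/- Let Δ ≥ 1, let f = (f_0, f_1, …, f_Δ) be a vector of complex numbers, and suppose the local polynomial P_f(z) = Σ_{i=0}^Δ C(Δ,i) f_i z^i is H_ε-stable for some ε > 0. Let G = (V,E) be a finite Δ-regular simple graph, and for each subset σ ⊆ E and vertex v ∈ V let deg_σ(v) denote the number of edges of σ incident to v. Define Z_k(G;f) = Σ_{σ ⊆ E, |σ| = k} Π_{v∈V} f_{deg_σ(v)} and P_G(z) = Σ_{k=0}^{|E|} Z_k(G;f) z^k. Then P_G(z) ≠ 0 for every z in the δ-strip of [0,1] with δ = ε²/2. -/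

import Mathlib

set_option maxHeartbeats 1000000

open Finset Polynomial



lemma holant_real_core (ε u σ t : ℝ) (hε : 0 < ε) (hu : ε^2 ≤ u) (hσ : ε^2/2 ≤ σ)
    (ht0 : 0 ≤ t) (ht1 : 4*u*σ ≤ t^2) :
    4*(u - ε^2)*(σ - ε^2/2) < t^2 - t*ε^2 := by
  have hq0 : 2*ε^2 ≤ 2*u + 4*σ - 2*ε^2 := by nlinarith
  by_cases hcase : t < 2*u + 4*σ - 2*ε^2
  · nlinarith [sq_nonneg ε, mul_pos hε hε]
  · push_neg at hcase
    have h1 : 0 ≤ (t - (2*u + 4*σ - 2*ε^2))*(t + (2*u + 4*σ - 2*ε^2) - ε^2) := by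
      apply mul_nonneg (by linarith)
      nlinarith
    have hp : 0 ≤ u - ε^2 := by linarith
    have hr : 0 ≤ σ - ε^2/2 := by linarith
    have h2 : 2*ε^4 ≤ (2*u + 4*σ - 2*ε^2)^2 - ε^2*(2*u + 4*σ - 2*ε^2)
        - (4*u*σ - 2*u*ε^2 - 4*σ*ε^2 + 2*ε^4) := by
      nlinarith [mul_nonneg hp hr, sq_nonneg (u - ε^2), sq_nonneg (σ - ε^2/2),
        mul_nonneg hp (sq_nonneg ε), mul_nonneg hr (sq_nonneg ε)]
    nlinarith [pow_pos hε 4]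

lemma holant_key_real (ε A B α β x y : ℝ) (hε : 0 < ε) (hA : ε ≤ A) (hB : ε ≤ B)
    (hy : |y| ≤ ε^2/2) (hx1 : -(ε^2/2) ≤ x)
    (hRb : A*B - α*β + x ≤ 2*((A-ε)*(B-ε))) :
    4*((A-ε)*(B-ε))*((A-ε)*(B-ε) - (A*B - α*β + x)) < (A*β + B*α + y)^2 := by
  have hy2 : y^2 ≤ (ε^2/2)^2 := by
    have := abs_le.mp hy; nlinarith [this.1, this.2]
  have hAB : ε^2 ≤ A*B := by nlinarith
  have hlm0 : 0 ≤ (A-ε)*(B-ε) := mul_nonneg (by linarith) (by linarith)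
  by_cases hlm : (A-ε)*(B-ε) = 0
  · rw [hlm]
    have hRle : A*B - α*β + x ≤ 0 := by rw [hlm] at hRb; linarith
    have hσ : ε^2/2 ≤ α*β := by nlinarith
    have hJ : 4*(A*B)*(α*β) ≤ (A*β + B*α)^2 := by nlinarith [sq_nonneg (A*β - B*α)]
    have hJ2 : 2*ε^4 ≤ (A*β + B*α)^2 := by nlinarith
    have hne : A*β + B*α + y ≠ 0 := by
      intro h0
      have h3 : A*β + B*α = -y := by linarith
      have h4 : (A*β + B*α)^2 = y^2 := by rw [h3]; ring
      nlinarith [pow_pos hε 4]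
    have := sq_pos_of_ne_zero hne
    nlinarith
  · have hlmpos : 0 < (A-ε)*(B-ε) := lt_of_le_of_ne hlm0 (Ne.symm hlm)
    by_cases hneg : (A-ε)*(B-ε) - (A*B - α*β + x) < 0
    · nlinarith [sq_nonneg (A*β + B*α + y)]
    push_neg at hneg
    have hσ' : (A-ε)*(B-ε) - (A*B - α*β + x) ≤ α*β - ε^2/2 := by nlinarith
    have hσ : ε^2/2 ≤ α*β := by linarith
    have hJ : 4*(A*B)*(α*β) ≤ (A*β + B*α)^2 := by nlinarith [sq_nonneg (A*β - B*α)]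
    set J := A*β + B*α with hJdef
    have ht0 : 0 ≤ |J| := abs_nonneg J
    have ht2 : |J|^2 = J^2 := sq_abs J
    have hJy : -(ε^2 * |J|) ≤ 2*J*y := by
      have h1' : |2*J*y| ≤ ε^2 * |J| := by
        rw [abs_mul, abs_mul, abs_two]
        nlinarith [mul_le_mul_of_nonneg_left hy (by positivity : (0:ℝ) ≤ 2*|J|)]
      have := neg_abs_le (2*J*y)
      linarith
    have hbound : 4*((A-ε)*(B-ε))*((A-ε)*(B-ε) - (A*B - α*β + x))
        ≤ 4*(A*B-ε^2)*(α*β - ε^2/2) := by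
      have h1' : (A-ε)*(B-ε) ≤ A*B - ε^2 := by nlinarith
      have h2' : (0:ℝ) ≤ A*B - ε^2 := by linarith
      nlinarith
    have hcore := holant_real_core ε (A*B) (α*β) |J| hε hAB hσ ht0 (by nlinarith)
    have hexp : (A*β + B*α + y)^2 = J^2 + 2*J*y + y^2 := by rw [hJdef]; ring
    nlinarith [sq_nonneg y]

lemma holant_key_ineq (ε : ℝ) (hε : 0 < ε) (a b z : ℂ)
    (him : |z.im| ≤ ε^2/2) (h1 : -(ε^2/2) ≤ z.re) (h2 : z.re ≤ 1 + ε^2/2)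
    (ha : ε ≤ a.re) (hb : ε ≤ b.re) :
    2*((a.re - ε)*(b.re - ε)) < ‖a*b+z‖ + (a*b+z).re := by
  have hR : (a*b+z).re = a.re*b.re - a.im*b.im + z.re := by
    simp [Complex.add_re, Complex.mul_re]
  have hI : (a*b+z).im = a.re*b.im + b.re*a.im + z.im := by
    simp [Complex.add_im, Complex.mul_im]; ring
  have habs0 : 0 ≤ ‖a*b+z‖ := norm_nonneg _
  by_cases hRb : 2*((a.re - ε)*(b.re - ε)) < (a*b+z).re
  · linarith
  push_neg at hRb
  have key2 := holant_key_real ε a.re b.re a.im b.im z.re z.im hε ha hb him h1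
    (by rw [hR] at hRb; linarith)
  rw [← hR, ← hI] at key2
  have habs2 : (‖a*b+z‖)^2 = (a*b+z).re^2 + (a*b+z).im^2 := by
    rw [Complex.sq_norm, Complex.normSq_apply]; ring
  have hlm0 : 0 ≤ (a.re-ε)*(b.re-ε) := mul_nonneg (by linarith) (by linarith)
  have hsq : (2*((a.re - ε)*(b.re - ε)) - (a*b+z).re)^2 < (‖a*b+z‖)^2 := by
    nlinarith
  have := lt_of_pow_lt_pow_left₀ 2 habs0 hsq
  linarith


/-- Half-plane witnesses in the degenerate case: `a.re < ε`. -/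
lemma holant_exists_aux (ε : ℝ) (hε : 0 < ε) (a b w : ℂ) (ha : a.re < ε) :
    ∃ s t : ℂ, -ε < s.re ∧ -ε < t.re ∧ (s+a)*(t+b) = w := by
  have hd : 0 < ε - a.re := by linarith
  obtain ⟨r, hrdef⟩ : ∃ r : ℝ, r = |b.re| + |w.re|/(ε - a.re) + 1 := ⟨_, rfl⟩
  have hdiv : 0 ≤ |w.re|/(ε - a.re) := div_nonneg (abs_nonneg _) hd.le
  have hr : 0 < r := by rw [hrdef]; have := abs_nonneg b.re; linarith
  have hrc : (r:ℂ) ≠ 0 := by exact_mod_cast hr.ne'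
  refine ⟨w * (r:ℂ)⁻¹ - a, (r:ℂ) - b, ?_, ?_, ?_⟩
  · have hre : (w * (r:ℂ)⁻¹ - a).re = w.re * r⁻¹ - a.re := by
      rw [← Complex.ofReal_inv]
      simp [Complex.sub_re, Complex.mul_re]
    rw [hre]
    have key : |w.re| < r * (ε - a.re) := by
      have h3 : |w.re|/(ε-a.re)*(ε-a.re) = |w.re| := div_mul_cancel₀ _ hd.ne'
      calc |w.re| = (|w.re|/(ε-a.re))*(ε-a.re) := h3.symm
      _ < r*(ε-a.re) := by
          apply mul_lt_mul_of_pos_right _ hd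
          rw [hrdef]; have := abs_nonneg b.re; linarith
    have h5 : -(|w.re| * r⁻¹) ≤ w.re * r⁻¹ := by
      have h51 := neg_abs_le w.re
      have h52 : -|w.re| * r⁻¹ ≤ w.re * r⁻¹ :=
        mul_le_mul_of_nonneg_right h51 (inv_nonneg.mpr hr.le)
      linarith [h52]
    have h6 : |w.re| * r⁻¹ < ε - a.re := by
      rw [← div_eq_mul_inv]
      exact (div_lt_iff₀ hr).mpr (by linarith)
    linarith
  · have hre : ((r:ℂ) - b).re = r - b.re := by
      simp [Complex.sub_re, Complex.ofReal_re]
    rw [hre, hrdef]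
    have := le_abs_self b.re
    linarith
  · have h7 : (w * (r:ℂ)⁻¹ - a + a) * ((r:ℂ) - b + b) = w * ((r:ℂ)⁻¹ * (r:ℂ)) := by ring
    rw [h7, inv_mul_cancel₀ hrc, mul_one]

lemma holant_exists_product (ε : ℝ) (hε : 0 < ε) (a b z : ℂ)
    (him : |z.im| ≤ ε^2/2) (h1 : -(ε^2/2) ≤ z.re) (h2 : z.re ≤ 1 + ε^2/2) :
    ∃ s t : ℂ, -ε < s.re ∧ -ε < t.re ∧ (s+a)*(t+b) = a*b + z := by
  by_cases ha : ε ≤ a.re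
  · by_cases hb : ε ≤ b.re
    · -- main case
      obtain ⟨w, hwdef⟩ : ∃ w : ℂ, w = a*b+z := ⟨_, rfl⟩
      have KEY : 2*((a.re - ε)*(b.re - ε)) < ‖w‖ + w.re := by
        rw [hwdef]; exact holant_key_ineq ε hε a b z him h1 h2 ha hb
      obtain ⟨l, hldef⟩ : ∃ l : ℝ, l = a.re - ε := ⟨_, rfl⟩
      obtain ⟨m, hmdef⟩ : ∃ m : ℝ, m = b.re - ε := ⟨_, rfl⟩
      rw [← hldef, ← hmdef] at KEY
      have hl0 : 0 ≤ l := by rw [hldef]; linarith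
      have hm0 : 0 ≤ m := by rw [hmdef]; linarith
      have hlm0 : 0 ≤ l*m := mul_nonneg hl0 hm0
      have habsre1 : |w.re| ≤ ‖w‖ := Complex.abs_re_le_norm w
      have habsre : -‖w‖ ≤ w.re := by
        have h4 := neg_abs_le w.re
        linarith [(abs_le.mp habsre1).1]
      have hrad1 : 0 ≤ (‖w‖ + w.re)/2 := by linarith
      have hrad2 : 0 ≤ (‖w‖ - w.re)/2 := by
        have := le_abs_self w.re
        linarith
      obtain ⟨g, hgdef⟩ : ∃ g : ℝ, g = Real.sqrt ((‖w‖ + w.re)/2) := ⟨_, rfl⟩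
      obtain ⟨h, hhdef⟩ : ∃ h : ℝ, h = Real.sqrt ((‖w‖ - w.re)/2) := ⟨_, rfl⟩
      obtain ⟨sg, hsgdef⟩ : ∃ sg : ℝ, sg = if w.im < 0 then -1 else 1 := ⟨_, rfl⟩
      have hg2 : g^2 = (‖w‖ + w.re)/2 := by rw [hgdef]; exact Real.sq_sqrt hrad1
      have hh2 : h^2 = (‖w‖ - w.re)/2 := by rw [hhdef]; exact Real.sq_sqrt hrad2
      have hgpos : 0 < g := by rw [hgdef]; exact Real.sqrt_pos.mpr (by linarith)
      have hglm : l*m < g^2 := by rw [hg2]; linarith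
      have hsg2 : sg^2 = 1 := by rw [hsgdef]; split <;> norm_num
      have habs2 : (‖w‖)^2 = w.re^2 + w.im^2 := by
        rw [Complex.sq_norm, Complex.normSq_apply]; ring
      have hgh : g * h = |w.im|/2 := by
        rw [hgdef, hhdef, ← Real.sqrt_mul hrad1]
        have h5 : (‖w‖ + w.re)/2 * ((‖w‖ - w.re)/2) = (w.im/2)^2 := by
          linear_combination habs2 / 4
        rw [h5, Real.sqrt_sq_eq_abs, abs_div]
        norm_num
      have hu : (⟨g, sg*h⟩:ℂ) * ⟨g, sg*h⟩ = w := by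
        apply Complex.ext
        · show g*g - (sg*h)*(sg*h) = w.re
          have h7 : (sg*h)*(sg*h) = sg^2*(h*h) := by ring
          rw [h7, hsg2, one_mul]
          linear_combination hg2 - hh2
        · show g*(sg*h) + (sg*h)*g = w.im
          have h6 : g*(sg*h) + (sg*h)*g = 2*sg*(g*h) := by ring
          rw [h6, hgh, hsgdef]
          split
          · rw [abs_of_neg (by assumption)]; ring
          · next hnn => rw [abs_of_nonneg (by linarith [not_lt.mp hnn])]; ring
      obtain ⟨τ, hτdef⟩ : ∃ τ : ℝ, τ = (l + g^2)/(g*(1+m)) := ⟨_, rfl⟩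
      have hden : 0 < g*(1+m) := by nlinarith
      have hnum : 0 < l + g^2 := by nlinarith
      have hτpos : 0 < τ := by rw [hτdef]; exact div_pos hnum hden
      refine ⟨(τ:ℂ) * ⟨g, sg*h⟩ - a, ((τ⁻¹:ℝ):ℂ) * ⟨g, sg*h⟩ - b, ?_, ?_, ?_⟩
      · have hre : ((τ:ℂ) * (⟨g, sg*h⟩:ℂ) - a).re = τ * g - a.re := by
          rw [Complex.sub_re, Complex.re_ofReal_mul]
        rw [hre]
        have h7 : τ * g = (l + g^2)/(1+m) := by
          rw [hτdef]; field_simp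
        have h8 : l < (l + g^2)/(1+m) := by
          rw [lt_div_iff₀ (by linarith : (0:ℝ) < 1+m)]
          nlinarith
        have hare : a.re = l + ε := by rw [hldef]; ring
        rw [h7, hare]; linarith
      · have hre : (((τ⁻¹:ℝ):ℂ) * (⟨g, sg*h⟩:ℂ) - b).re = τ⁻¹ * g - b.re := by
          rw [Complex.sub_re, Complex.re_ofReal_mul]
        rw [hre]
        have h7 : τ⁻¹ * g = g^2*(1+m)/(l + g^2) := by
          rw [hτdef]; rw [inv_div]; field_simp
        have h8 : m < g^2*(1+m)/(l + g^2) := by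
          rw [lt_div_iff₀ hnum]
          nlinarith
        have hbre : b.re = m + ε := by rw [hmdef]; ring
        rw [h7, hbre]; linarith
      · have h9 : ((τ:ℂ) * (⟨g, sg*h⟩:ℂ) - a + a) * (((τ⁻¹:ℝ):ℂ) * (⟨g, sg*h⟩:ℂ) - b + b)
            = ((τ:ℂ) * ((τ⁻¹:ℝ):ℂ)) * ((⟨g, sg*h⟩:ℂ) * (⟨g, sg*h⟩:ℂ)) := by ring
        rw [h9, ← Complex.ofReal_mul, mul_inv_cancel₀ hτpos.ne', hu, ← hwdef]
        simp
    · push_neg at hb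
      obtain ⟨t, s, hts, hss, hprod⟩ := holant_exists_aux ε hε b a (a*b+z) hb
      exact ⟨s, t, hss, hts, by rw [mul_comm] at hprod; rw [hprod]⟩
  · push_neg at ha
    obtain ⟨s, t, hs, ht, hprod⟩ := holant_exists_aux ε hε a b (a*b+z) ha
    exact ⟨s, t, hs, ht, hprod⟩


/-- Pointwise Asano contraction for the half-plane / strip geometry. -/
lemma holant_asano (ε : ℝ) (hε : 0 < ε) (A B C D : ℂ)
    (h : ∀ s t : ℂ, -ε < s.re → -ε < t.re → A + B*s + C*t + D*(s*t) ≠ 0)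
    (z : ℂ) (him : |z.im| ≤ ε^2/2) (h1 : -(ε^2/2) ≤ z.re) (h2 : z.re ≤ 1 + ε^2/2) :
    A + D*z ≠ 0 := by
  by_cases hD : D = 0
  · have h0 := h 0 0 (by simp [hε]) (by simp [hε])
    simpa [hD] using h0
  · intro heq
    obtain ⟨s, t, hs, ht, hprod⟩ := holant_exists_product ε hε (C/D) (B/D) z him h1 h2
    apply h s t hs ht
    have hprod2 : D * ((s + C/D)*(t + B/D)) = D * (C/D*(B/D) + z) := by rw [hprod]
    have hDD : D * D⁻¹ = 1 := mul_inv_cancel₀ hD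
    linear_combination hprod2 + heq - (B*s+C*t)*hDD



lemma holant_sum_re_step (c M a1 a2 b1 b2 : ℝ) (hc : 0 ≤ c) (hM : 1 ≤ M)
    (h1 : c*(a1^2+a2^2) < a1) (h2 : (c/M)*(b1^2+b2^2) < b1) :
    (c/(M+1))*((a1+b1)^2+(a2+b2)^2) < a1 + b1 := by
  have hM0 : 0 < M := by linarith
  have hM1 : 0 < M + 1 := by linarith
  have key : M*((a1+b1)^2+(a2+b2)^2) ≤ (M+1)*(M*(a1^2+a2^2) + (b1^2+b2^2)) := by
    nlinarith [sq_nonneg (M*a1 - b1), sq_nonneg (M*a2 - b2)]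
  have h3 : c*(M*((a1+b1)^2+(a2+b2)^2)) ≤ c*((M+1)*(M*(a1^2+a2^2)+(b1^2+b2^2))) :=
    mul_le_mul_of_nonneg_left key hc
  have e1 : (c/(M+1))*((a1+b1)^2+(a2+b2)^2) ≤ c*(a1^2+a2^2) + (c/M)*(b1^2+b2^2) := by
    rw [div_mul_eq_mul_div, div_le_iff₀ hM1]
    have e2 : (c*(a1^2+a2^2) + c/M*(b1^2+b2^2))*(M+1)
        = c*((M+1)*(M*(a1^2+a2^2)+(b1^2+b2^2)))/M := by
      field_simp
    rw [e2, le_div_iff₀ hM0]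
    nlinarith [h3]
  linarith

lemma holant_sum_re_gt (c : ℝ) (hc : 0 ≤ c) : ∀ (l : List ℂ), l ≠ [] →
    (∀ v ∈ l, c * Complex.normSq v < v.re) →
    (c / l.length) * Complex.normSq l.sum < l.sum.re := by
  intro l
  induction l with
  | nil => intro h; exact absurd rfl h
  | cons v l ih =>
    intro _ hv
    by_cases hl : l = []
    · subst hl
      simp only [List.sum_cons, List.sum_nil, add_zero, List.length_cons, List.length_nil,
        Nat.zero_add, Nat.cast_one, div_one]
      exact hv v (by simp)
    · have hIH := ih hl (fun u hu => hv u (List.mem_cons_of_mem _ hu))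
      have hv0 := hv v (List.mem_cons_self)
      have hM : (1:ℝ) ≤ l.length := by
        have := List.length_pos_iff.mpr hl
        exact_mod_cast this
      have step := holant_sum_re_step c l.length v.re v.im l.sum.re l.sum.im hc hM
        (by rw [Complex.normSq_apply] at hv0; nlinarith [hv0])
        (by rw [Complex.normSq_apply] at hIH; nlinarith [hIH])
      simp only [List.sum_cons, List.length_cons]
      rw [Complex.normSq_apply, Complex.add_re, Complex.add_im]
      push_cast
      convert step using 3 <;> ring

lemma holant_eval_deriv (z : ℂ) : ∀ (L : List ℂ), (∀ r ∈ L, z - r ≠ 0) →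
    (Polynomial.derivative (L.map (fun r => X - C r)).prod).eval z
      = ((L.map (fun r => z - r)).prod) * ((L.map (fun r => (z - r)⁻¹)).sum) := by
  intro L
  induction L with
  | nil => intro _; simp
  | cons r L ih =>
    intro hL
    have hr := hL r (List.mem_cons_self)
    have ih' := ih (fun r' h' => hL r' (List.mem_cons_of_mem _ h'))
    simp only [List.map_cons, List.prod_cons, List.sum_cons]
    rw [derivative_mul, derivative_sub, derivative_X, derivative_C, sub_zero]
    rw [eval_add, eval_mul, eval_mul, eval_one, ih', eval_sub, eval_X, eval_C]
    rw [Polynomial.eval_list_prod, List.map_map]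
    have hcomp : (Polynomial.eval z) ∘ (fun r : ℂ => X - C r) = fun r => z - r := by
      funext r; simp
    rw [hcomp]
    field_simp

lemma holant_pow_aux (z : ℂ) (i : ℕ) : z * ((i:ℂ) * z^(i-1)) = (i:ℂ) * z^i := by
  cases i with
  | zero => simp
  | succ k => simp only [Nat.add_sub_cancel]; push_cast; ring

lemma holant_sum_identity (n : ℕ) (hn : 1 ≤ n) (f : ℕ → ℂ) (w z : ℂ) :
    (n:ℂ) * (∑ i ∈ Finset.range n, ((n-1).choose i : ℂ) * (f i + w * f (i+1)) * z^i)
    = (n:ℂ) * (∑ i ∈ Finset.range (n+1), (n.choose i:ℂ)*f i*z^i)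
      + (w - z) * (∑ i ∈ Finset.range (n+1), (n.choose i:ℂ)*f i*((i:ℂ)*z^(i-1))) := by
  have hc1 : ∀ i : ℕ, i < n → ((n:ℂ) - i) * (n.choose i : ℂ) = (n:ℂ) * ((n-1).choose i : ℂ) := by
    intro i hi
    have h1 := Nat.choose_succ_right_eq n i
    have h2 := Nat.add_one_mul_choose_eq (n-1) i
    rw [Nat.sub_add_cancel hn] at h2
    have hnat : (n.choose i) * (n - i) = n * ((n-1).choose i) := by
      rw [← h1, h2]
    calc ((n:ℂ) - i) * (n.choose i:ℂ) = ((n - i : ℕ):ℂ) * (n.choose i:ℂ) := by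
          rw [Nat.cast_sub (by omega)]
    _ = ((n.choose i * (n - i) : ℕ):ℂ) := by push_cast; ring
    _ = ((n * ((n-1).choose i) : ℕ):ℂ) := by rw [hnat]
    _ = (n:ℂ) * ((n-1).choose i:ℂ) := by push_cast; ring
  have hc2 : ∀ i : ℕ, ((i:ℂ)+1) * (n.choose (i+1) : ℂ) = (n:ℂ) * ((n-1).choose i : ℂ) := by
    intro i
    have h2 := Nat.add_one_mul_choose_eq (n-1) i
    rw [Nat.sub_add_cancel hn] at h2
    calc ((i:ℂ)+1) * (n.choose (i+1):ℂ) = ((n.choose (i+1) * (i+1) : ℕ):ℂ) := by push_cast; ring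
    _ = ((n * ((n-1).choose i) : ℕ):ℂ) := by rw [← h2]
    _ = (n:ℂ) * ((n-1).choose i:ℂ) := by push_cast; ring
  have hz : z * (∑ i ∈ Finset.range (n+1), (n.choose i:ℂ)*f i*((i:ℂ)*z^(i-1)))
      = ∑ i ∈ Finset.range (n+1), (n.choose i:ℂ)*f i*((i:ℂ)*z^i) := by
    rw [Finset.mul_sum]
    refine Finset.sum_congr rfl (fun i _ => ?_)
    rw [show z * ((n.choose i:ℂ)*f i*((i:ℂ)*z^(i-1)))
        = (n.choose i:ℂ)*f i*(z * ((i:ℂ)*z^(i-1))) by ring, holant_pow_aux]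
  have hB : (∑ i ∈ Finset.range (n+1), ((n:ℂ)-i)*(n.choose i:ℂ)*f i*z^i)
      = ∑ i ∈ Finset.range n, (n:ℂ)*((n-1).choose i:ℂ)*f i*z^i := by
    rw [Finset.sum_range_succ]
    have hlast : ((n:ℂ) - (n:ℕ)) = 0 := by push_cast; ring
    rw [hlast]
    simp only [zero_mul, add_zero]
    refine Finset.sum_congr rfl (fun i hi => ?_)
    linear_combination (f i * z^i) * hc1 i (Finset.mem_range.mp hi)
  have hC : (∑ i ∈ Finset.range (n+1), (n.choose i:ℂ)*f i*((i:ℂ)*z^(i-1)))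
      = ∑ i ∈ Finset.range n, (n:ℂ)*((n-1).choose i:ℂ)*f (i+1)*z^i := by
    rw [Finset.sum_range_succ']
    have h0 : (n.choose 0:ℂ)*f 0*(((0:ℕ):ℂ)*z^(0-1)) = 0 := by simp
    rw [h0, add_zero]
    refine Finset.sum_congr rfl (fun i hi => ?_)
    have e2 : i + 1 - 1 = i := by omega
    rw [e2]
    have e1 : ((i+1:ℕ):ℂ) = (i:ℂ)+1 := by push_cast; ring
    rw [e1]
    linear_combination (f (i+1) * z^i) * hc2 i
  have hS1 : (∑ i ∈ Finset.range (n+1), ((n:ℂ)-i)*(n.choose i:ℂ)*f i*z^i)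
      = (n:ℂ)*(∑ i ∈ Finset.range (n+1), (n.choose i:ℂ)*f i*z^i)
        - z*(∑ i ∈ Finset.range (n+1), (n.choose i:ℂ)*f i*((i:ℂ)*z^(i-1))) := by
    rw [hz, Finset.mul_sum, ← Finset.sum_sub_distrib]
    exact Finset.sum_congr rfl (fun i _ => by ring)
  calc (n:ℂ) * (∑ i ∈ Finset.range n, ((n-1).choose i : ℂ) * (f i + w * f (i+1)) * z^i)
      = (∑ i ∈ Finset.range n, (n:ℂ)*((n-1).choose i:ℂ)*f i*z^i)
        + w * ∑ i ∈ Finset.range n, (n:ℂ)*((n-1).choose i:ℂ)*f (i+1)*z^i := by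
        rw [Finset.mul_sum, Finset.mul_sum, ← Finset.sum_add_distrib]
        exact Finset.sum_congr rfl (fun i _ => by ring)
  _ = (∑ i ∈ Finset.range (n+1), ((n:ℂ)-i)*(n.choose i:ℂ)*f i*z^i)
        + w * ∑ i ∈ Finset.range (n+1), (n.choose i:ℂ)*f i*((i:ℂ)*z^(i-1)) := by
        rw [hB, hC]
  _ = _ := by rw [hS1]; ring

lemma holant_laguerre (ε : ℝ) (hε : 0 < ε) (n : ℕ) (hn : 1 ≤ n) (f : ℕ → ℂ)
    (hf : ∀ z : ℂ, -ε ≤ z.re → ∑ i ∈ Finset.range (n+1), (n.choose i : ℂ) * f i * z^i ≠ 0)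
    (w : ℂ) (hw : -ε ≤ w.re) :
    ∀ z : ℂ, -ε ≤ z.re →
      ∑ i ∈ Finset.range n, ((n-1).choose i : ℂ) * (f i + w * f (i+1)) * z^i ≠ 0 := by
  obtain ⟨P, hPdef⟩ : ∃ P : Polynomial ℂ,
      P = ∑ i ∈ Finset.range (n+1), C ((n.choose i : ℂ) * f i) * X^i := ⟨_, rfl⟩
  have hPeval : ∀ z : ℂ, P.eval z = ∑ i ∈ Finset.range (n+1), (n.choose i:ℂ)*f i*z^i := by
    intro z
    rw [hPdef, Polynomial.eval_finset_sum]
    exact Finset.sum_congr rfl (fun i _ => by simp)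
  have hPne : P ≠ 0 := by
    intro h0
    apply hf 0 (by rw [Complex.zero_re]; linarith)
    rw [← hPeval 0, h0, Polynomial.eval_zero]
  have hDeval : ∀ z : ℂ, P.derivative.eval z
      = ∑ i ∈ Finset.range (n+1), (n.choose i:ℂ)*f i*((i:ℂ)*z^(i-1)) := by
    intro z
    rw [hPdef, derivative_sum]
    rw [Polynomial.eval_finset_sum]
    refine Finset.sum_congr rfl (fun i _ => ?_)
    rw [derivative_C_mul_X_pow]
    simp
    ring
  have hdeg : P.natDegree ≤ n := by
    rw [hPdef]
    exact Polynomial.natDegree_sum_le_of_forall_le _ _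
      (fun i hi => le_trans (Polynomial.natDegree_C_mul_X_pow_le _ _)
        (Nat.lt_succ_iff.mp (Finset.mem_range.mp hi)))
  have hroots : ∀ r ∈ P.roots, r.re < -ε := by
    intro r hr
    by_contra hcon
    push_neg at hcon
    exact hf r hcon (by rw [← hPeval]; exact (Polynomial.mem_roots hPne).mp hr)
  have hsplits : P.Splits := IsAlgClosed.splits P
  have hfac : P = C P.leadingCoeff * (P.roots.map fun a => X - C a).prod :=
    hsplits.eq_prod_roots
  have hlc : P.leadingCoeff ≠ 0 := Polynomial.leadingCoeff_ne_zero.mpr hPne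
  obtain ⟨L, hLdef⟩ : ∃ L : List ℂ, L = P.roots.toList := ⟨_, rfl⟩
  have hLlen : L.length ≤ n := by
    rw [hLdef, Multiset.length_toList]
    exact le_trans (Polynomial.card_roots' P) hdeg
  have hLmem : ∀ r ∈ L, r.re < -ε := by
    intro r hr
    exact hroots r (by rwa [hLdef, Multiset.mem_toList] at hr)
  have hLprod : (P.roots.map fun a => X - C a).prod = (L.map fun a => X - C a).prod := by
    rw [hLdef, ← Multiset.coe_toList P.roots, Multiset.map_coe, Multiset.prod_coe,
      Multiset.coe_toList]
  have hfacL : P = C P.leadingCoeff * (L.map fun a => X - C a).prod := by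
    rw [← hLprod]; exact hfac
  intro z hz heq
  have hne : ∀ r ∈ L, z - r ≠ 0 := by
    intro r hr h0
    have h1 : (z - r).re = 0 := by rw [h0]; rfl
    rw [Complex.sub_re] at h1
    have := hLmem r hr
    linarith
  have hPevalz : P.eval z = P.leadingCoeff * (L.map (fun r => z - r)).prod := by
    conv_lhs => rw [hfacL]
    rw [Polynomial.eval_mul, Polynomial.eval_C, Polynomial.eval_list_prod, List.map_map]
    have hcomp : (Polynomial.eval z) ∘ (fun r : ℂ => X - C r) = fun r => z - r := by
      funext r; simp
    rw [hcomp]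
  have hDevalz : P.derivative.eval z
      = P.leadingCoeff * ((L.map (fun r => z - r)).prod * (L.map (fun r => (z - r)⁻¹)).sum) := by
    conv_lhs => rw [hfacL]
    rw [Polynomial.derivative_C_mul, Polynomial.eval_mul, Polynomial.eval_C,
      holant_eval_deriv z L hne]
  have hProdne : (L.map (fun r => z - r)).prod ≠ 0 := by
    apply List.prod_ne_zero
    intro h0
    obtain ⟨r, hr, hr0⟩ := List.mem_map.mp h0
    exact hne r hr hr0
  -- reduce to `n + (w - z) * S = 0`
  have hkey := holant_sum_identity n hn f w z
  rw [heq, mul_zero, ← hPeval, ← hDeval] at hkey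
  rw [hPevalz, hDevalz] at hkey
  obtain ⟨S, hSdef⟩ : ∃ S : ℂ, S = (L.map (fun r => (z - r)⁻¹)).sum := ⟨_, rfl⟩
  have hmain : (n:ℂ) + (w - z) * S = 0 := by
    have h3 : P.leadingCoeff * (L.map (fun r => z - r)).prod * ((n:ℂ) + (w - z) * S) = 0 := by
      rw [hSdef]; linear_combination -hkey
    rcases mul_eq_zero.mp h3 with h4 | h4
    · rcases mul_eq_zero.mp h4 with h5 | h5
      · exact absurd h5 hlc
      · exact absurd h5 hProdne
    · exact h4
  have hn0 : ((n:ℂ)) ≠ 0 := Nat.cast_ne_zero.mpr (by omega)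
  have hLne : L ≠ [] := by
    intro h0
    rw [h0] at hSdef
    simp at hSdef
    rw [hSdef, mul_zero, add_zero] at hmain
    exact hn0 hmain
  have hSne : S ≠ 0 := by
    intro h0
    rw [h0, mul_zero, add_zero] at hmain
    exact hn0 hmain
  -- apply the averaging lemma
  obtain ⟨c, hcdef⟩ : ∃ c : ℝ, c = z.re + ε := ⟨_, rfl⟩
  have hc0 : 0 ≤ c := by rw [hcdef]; linarith
  have hlist : ∀ v ∈ L.map (fun r => (z - r)⁻¹), c * Complex.normSq v < v.re := by
    intro v hv
    obtain ⟨r, hr, rfl⟩ := List.mem_map.mp hv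
    have hN : 0 < Complex.normSq (z - r) := Complex.normSq_pos.mpr (hne r hr)
    rw [Complex.inv_re, Complex.normSq_inv]
    rw [div_eq_mul_inv]
    apply mul_lt_mul_of_pos_right _ (inv_pos.mpr hN)
    rw [Complex.sub_re]
    have := hLmem r hr
    rw [hcdef]; linarith
  have hgt := holant_sum_re_gt c hc0 (L.map (fun r => (z - r)⁻¹))
    (by simpa using hLne) hlist
  rw [← hSdef, List.length_map] at hgt
  have hNS : 0 < Complex.normSq S := Complex.normSq_pos.mpr hSne
  have hlen1 : 1 ≤ L.length := List.length_pos_iff.mpr hLne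
  have hchain : (c/(n:ℝ)) * Complex.normSq S < S.re := by
    have h6 : (c/(n:ℝ)) ≤ (c/(L.length:ℝ)) := by
      apply div_le_div_of_nonneg_left hc0
      · exact_mod_cast hlen1
      · exact_mod_cast hLlen
    calc (c/(n:ℝ)) * Complex.normSq S ≤ (c/(L.length:ℝ)) * Complex.normSq S :=
          mul_le_mul_of_nonneg_right h6 hNS.le
    _ < S.re := hgt
  -- compute w - z = -n * S⁻¹
  have hwz : w - z = -((n:ℂ) * S⁻¹) := by
    have h7 : (w - z) * S = -(n:ℂ) := by linear_combination hmain
    have h8 : (w - z) * S * S⁻¹ = -(n:ℂ) * S⁻¹ := by rw [h7]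
    rwa [mul_assoc, mul_inv_cancel₀ hSne, mul_one, neg_mul] at h8
  have hwre : w.re = z.re - (n:ℝ) * (S.re / Complex.normSq S) := by
    have h8 : w = z - (n:ℂ) * S⁻¹ := by linear_combination hwz
    rw [h8, Complex.sub_re, Complex.mul_re, Complex.inv_re, Complex.inv_im]
    simp [Complex.natCast_re, Complex.natCast_im]
  have hnpos : 0 < (n:ℝ) := by exact_mod_cast (by omega : 0 < n)
  have hfinal : c < (n:ℝ) * (S.re / Complex.normSq S) := by
    rw [div_mul_eq_mul_div, div_lt_iff₀ hnpos] at hchain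
    rw [show (n:ℝ)*(S.re/Complex.normSq S) = (n:ℝ)*S.re/Complex.normSq S by ring,
      lt_div_iff₀ hNS]
    nlinarith [hchain]
  rw [hcdef] at hfinal
  rw [hwre] at hw
  linarith

lemma holant_gws (ε : ℝ) (hε : 0 < ε) :
    ∀ (n : ℕ) (f : ℕ → ℂ),
      (∀ z : ℂ, -ε ≤ z.re → ∑ i ∈ Finset.range (n+1), (n.choose i : ℂ) * f i * z^i ≠ 0) →
      ∀ {ι : Type} [DecidableEq ι] (s : Finset ι) (x : ι → ℂ), s.card = n →
        (∀ j ∈ s, -ε ≤ (x j).re) →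
        (∑ A ∈ s.powerset, f A.card * ∏ j ∈ A, x j) ≠ 0 := by
  intro n
  induction n with
  | zero =>
    intro f hf ι _ s x hcard _
    rw [Finset.card_eq_zero] at hcard; subst hcard
    simp only [Finset.powerset_empty, Finset.sum_singleton, Finset.card_empty,
      Finset.prod_empty, mul_one]
    have h0 := hf 0 (by rw [Complex.zero_re]; linarith)
    simpa using h0
  | succ m IH =>
    intro f hf ι _ s x hcard hx
    have hpos : 0 < s.card := by rw [hcard]; exact Nat.succ_pos m
    obtain ⟨j₀, hj₀⟩ := Finset.card_pos.mp hpos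
    have hw := hx j₀ hj₀
    have hlag := holant_laguerre ε hε (m+1) (Nat.succ_le_succ (Nat.zero_le m)) f hf (x j₀) hw
    simp only [Nat.add_sub_cancel] at hlag
    have hne : j₀ ∉ s.erase j₀ := Finset.notMem_erase _ _
    have hcard' : (s.erase j₀).card = m := by
      rw [Finset.card_erase_of_mem hj₀, hcard]; rfl
    have hsum : (∑ A ∈ s.powerset, f A.card * ∏ j ∈ A, x j)
        = ∑ A ∈ (s.erase j₀).powerset, (f A.card + x j₀ * f (A.card+1)) * ∏ j ∈ A, x j := by
      conv_lhs => rw [show s = insert j₀ (s.erase j₀) from (Finset.insert_erase hj₀).symm]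
      rw [Finset.sum_powerset_insert hne, ← Finset.sum_add_distrib]
      refine Finset.sum_congr rfl (fun A hA => ?_)
      have hjA : j₀ ∉ A := fun h => hne (Finset.mem_powerset.mp hA h)
      rw [Finset.card_insert_of_notMem hjA, Finset.prod_insert hjA]
      ring
    rw [hsum]
    exact IH (fun i => f i + x j₀ * f (i+1)) hlag (s.erase j₀) x hcard'
      (fun j hj => hx j (Finset.mem_of_mem_erase hj))


section Comb

variable {κ ι : Type} [DecidableEq κ] [DecidableEq ι]

lemma holant_powerset_split (U : Finset κ) (q : κ → Prop) [DecidablePred q]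
    (g : Finset κ → ℂ) :
    ∑ H ∈ U.powerset, g H
      = ∑ H₀ ∈ (U.filter q).powerset, ∑ H₁ ∈ (U.filter (fun p => ¬ q p)).powerset,
          g (H₀ ∪ H₁) := by
  rw [← Finset.sum_product']
  refine Finset.sum_bij' (fun H _ => (H.filter q, H.filter (fun p => ¬ q p)))
    (fun P _ => P.1 ∪ P.2) ?_ ?_ ?_ ?_ ?_
  · intro H hH
    rw [Finset.mem_product]
    exact ⟨Finset.mem_powerset.mpr (Finset.filter_subset_filter _ (Finset.mem_powerset.mp hH)),
      Finset.mem_powerset.mpr (Finset.filter_subset_filter _ (Finset.mem_powerset.mp hH))⟩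
  · intro P hP
    rw [Finset.mem_product] at hP
    exact Finset.mem_powerset.mpr (Finset.union_subset
      ((Finset.mem_powerset.mp hP.1).trans (Finset.filter_subset _ _))
      ((Finset.mem_powerset.mp hP.2).trans (Finset.filter_subset _ _)))
  · intro H _
    exact Finset.filter_union_filter_not_eq q H
  · intro P hP
    rw [Finset.mem_product] at hP
    have h1 : ∀ p ∈ P.1, q p := fun p hp =>
      (Finset.mem_filter.mp ((Finset.mem_powerset.mp hP.1) hp)).2
    have h2 : ∀ p ∈ P.2, ¬ q p := fun p hp =>
      (Finset.mem_filter.mp ((Finset.mem_powerset.mp hP.2) hp)).2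
    have e1 : (P.1 ∪ P.2).filter q = P.1 := by
      rw [Finset.filter_union, Finset.filter_true_of_mem h1,
        Finset.filter_false_of_mem h2, Finset.union_empty]
    have e2 : (P.1 ∪ P.2).filter (fun p => ¬ q p) = P.2 := by
      rw [Finset.filter_union, Finset.filter_false_of_mem (fun p hp h => h (h1 p hp)),
        Finset.filter_true_of_mem h2, Finset.empty_union]
    show ((P.1 ∪ P.2).filter q, (P.1 ∪ P.2).filter (fun p => ¬ q p)) = P
    rw [e1, e2]
  · intro H _
    show g H = g (H.filter q ∪ H.filter (fun p => ¬ q p))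
    rw [Finset.filter_union_filter_not_eq q H]

lemma holant_sum_powerset_fiber (T : Finset ι) (F : ι → Finset κ → ℂ) :
    ∀ (U : Finset κ) (k : κ → ι), (∀ p ∈ U, k p ∈ T) →
    ∑ H ∈ U.powerset, ∏ v ∈ T, F v (H.filter (fun p => k p = v))
      = ∏ v ∈ T, ∑ A ∈ (U.filter (fun p => k p = v)).powerset, F v A := by
  induction T using Finset.induction_on with
  | empty =>
    intro U k hU
    have hU0 : U = ∅ :=
      Finset.eq_empty_of_forall_notMem (fun p hp => (Finset.notMem_empty _) (hU p hp))
    subst hU0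
    simp
  | @insert v₀ T hv₀ ih =>
    intro U k hU
    rw [holant_powerset_split U (fun p => k p = v₀)]
    have hterm : ∀ H₀ ∈ (U.filter (fun p => k p = v₀)).powerset,
        ∀ H₁ ∈ (U.filter (fun p => ¬ k p = v₀)).powerset,
        ∏ v ∈ insert v₀ T, F v ((H₀ ∪ H₁).filter (fun p => k p = v))
          = F v₀ H₀ * ∏ v ∈ T, F v (H₁.filter (fun p => k p = v)) := by
      intro H₀ hH₀ H₁ hH₁
      have h1 : ∀ p ∈ H₀, k p = v₀ := fun p hp =>
        (Finset.mem_filter.mp ((Finset.mem_powerset.mp hH₀) hp)).2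
      have h2 : ∀ p ∈ H₁, ¬ k p = v₀ := fun p hp =>
        (Finset.mem_filter.mp ((Finset.mem_powerset.mp hH₁) hp)).2
      rw [Finset.prod_insert hv₀]
      have e1 : (H₀ ∪ H₁).filter (fun p => k p = v₀) = H₀ := by
        rw [Finset.filter_union, Finset.filter_true_of_mem h1,
          Finset.filter_false_of_mem h2, Finset.union_empty]
      rw [e1]
      congr 1
      refine Finset.prod_congr rfl (fun v hv => ?_)
      have hvne : v ≠ v₀ := fun h => hv₀ (h ▸ hv)
      congr 1
      rw [Finset.filter_union, Finset.filter_false_of_mem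
        (fun p hp => (h1 p hp).symm ▸ fun h => hvne h.symm), Finset.empty_union]
    rw [Finset.sum_congr rfl (fun H₀ hH₀ => Finset.sum_congr rfl (fun H₁ hH₁ =>
      hterm H₀ hH₀ H₁ hH₁))]
    have hsplit : ∑ H₀ ∈ (U.filter (fun p => k p = v₀)).powerset,
        ∑ H₁ ∈ (U.filter (fun p => ¬ k p = v₀)).powerset,
          F v₀ H₀ * ∏ v ∈ T, F v (H₁.filter (fun p => k p = v))
        = (∑ H₀ ∈ (U.filter (fun p => k p = v₀)).powerset, F v₀ H₀)
          * ∑ H₁ ∈ (U.filter (fun p => ¬ k p = v₀)).powerset,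
              ∏ v ∈ T, F v (H₁.filter (fun p => k p = v)) := by
      rw [Finset.sum_mul]
      exact Finset.sum_congr rfl (fun H₀ _ => by rw [Finset.mul_sum])
    rw [hsplit, ih (U.filter (fun p => ¬ k p = v₀)) k (fun p hp => by
      have h3 := hU p (Finset.mem_of_mem_filter _ hp)
      have h4 := (Finset.mem_filter.mp hp).2
      rcases Finset.mem_insert.mp h3 with h | h
      · exact absurd h h4
      · exact h)]
    rw [Finset.prod_insert hv₀]
    congr 1
    refine Finset.prod_congr rfl (fun v hv => ?_)
    have hvne : v ≠ v₀ := fun h => hv₀ (h ▸ hv)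
    congr 2
    rw [Finset.filter_filter]
    refine Finset.filter_congr (fun p _ => ?_)
    constructor
    · intro h; exact h.2
    · intro h; exact ⟨fun h' => hvne (h' ▸ h).symm, h⟩
  
end Comb

section Graph

variable {V : Type} [Fintype V] [DecidableEq V]

def holantHE (F : Finset (Sym2 V)) : Finset (Sym2 V × V) :=
  (F ×ˢ Finset.univ).filter (fun p => p.2 ∈ p.1)

lemma holantHE_mem {F : Finset (Sym2 V)} {p : Sym2 V × V} :
    p ∈ holantHE F ↔ p.1 ∈ F ∧ p.2 ∈ p.1 := by
  simp [holantHE, Finset.mem_filter, Finset.mem_product]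

noncomputable def holantZ (f : ℕ → ℂ) (E S : Finset (Sym2 V)) (ζ : Sym2 V → ℂ)
    (x : Sym2 V × V → ℂ) : ℂ :=
  ∑ σ ∈ S.powerset, ∑ H ∈ (holantHE (E \ S)).powerset,
    (∏ e ∈ σ, ζ e) * (∏ p ∈ H, x p) *
      ∏ v : V, f ((σ.filter (fun e => v ∈ e)).card + (H.filter (fun p => p.2 = v)).card)

lemma holantZ_full (f : ℕ → ℂ) (E : Finset (Sym2 V)) (ζ : Sym2 V → ℂ)
    (x : Sym2 V × V → ℂ) :
    holantZ f E E ζ x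
      = ∑ σ ∈ E.powerset, (∏ e ∈ σ, ζ e) * ∏ v : V, f ((σ.filter (fun e => v ∈ e)).card) := by
  unfold holantZ
  rw [Finset.sdiff_self]
  have h0 : holantHE (∅ : Finset (Sym2 V)) = ∅ := by
    ext p; simp [holantHE_mem]
  rw [h0, Finset.powerset_empty]
  refine Finset.sum_congr rfl (fun σ _ => ?_)
  rw [Finset.sum_singleton]
  simp

lemma holantZ_empty (f : ℕ → ℂ) (E : Finset (Sym2 V)) (ζ : Sym2 V → ℂ)
    (x : Sym2 V × V → ℂ) :
    holantZ f E ∅ ζ x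
      = ∏ v : V, ∑ A ∈ ((holantHE E).filter (fun p => p.2 = v)).powerset,
          f A.card * ∏ p ∈ A, x p := by
  unfold holantZ
  rw [Finset.powerset_empty, Finset.sum_singleton, Finset.sdiff_empty]
  have step1 : ∀ H ∈ (holantHE E).powerset,
      (∏ e ∈ (∅:Finset (Sym2 V)), ζ e) * (∏ p ∈ H, x p) *
        ∏ v : V, f (((∅:Finset (Sym2 V)).filter (fun e => v ∈ e)).card
          + (H.filter (fun p => p.2 = v)).card)
      = ∏ v : V, (f ((H.filter (fun p => p.2 = v)).card)
          * ∏ p ∈ H.filter (fun p => p.2 = v), x p) := by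
    intro H _
    rw [Finset.prod_mul_distrib]
    have hx : (∏ p ∈ H, x p) = ∏ v : V, ∏ p ∈ H.filter (fun p => p.2 = v), x p :=
      (Finset.prod_fiberwise_of_maps_to (fun p _ => Finset.mem_univ p.2) x).symm
    rw [Finset.prod_empty, one_mul, hx]
    rw [mul_comm]
    congr 1
    refine Finset.prod_congr rfl (fun v _ => ?_)
    congr 1
    simp
  rw [Finset.sum_congr rfl step1]
  exact holant_sum_powerset_fiber Finset.univ
    (fun v A => f A.card * ∏ p ∈ A, x p) (holantHE E) Prod.snd
    (fun p _ => Finset.mem_univ _)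

end Graph

section Step

variable {V : Type} [Fintype V] [DecidableEq V]

lemma holant_card_filter_insert_snd (H : Finset (Sym2 V × V)) (q : Sym2 V) (y : V)
    (hp₀ : (q,y) ∉ H) (v : V) :
    ((insert (q,y) H).filter (fun p => p.2 = v)).card
      = (H.filter (fun p => p.2 = v)).card + (if v = y then 1 else 0) := by
  rw [Finset.filter_insert]
  by_cases hv : y = v
  · rw [if_pos hv, if_pos hv.symm,
      Finset.card_insert_of_notMem (fun hmem => hp₀ (Finset.mem_of_mem_filter _ hmem))]
  · rw [if_neg hv, if_neg (fun h => hv h.symm), add_zero]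

lemma holant_card_filter_insert_edge (σ : Finset (Sym2 V)) (e : Sym2 V) (he : e ∉ σ) (v : V) :
    ((insert e σ).filter (fun e' => v ∈ e')).card
      = (σ.filter (fun e' => v ∈ e')).card + (if v ∈ e then 1 else 0) := by
  rw [Finset.filter_insert]
  by_cases hv : v ∈ e
  · rw [if_pos hv, if_pos hv,
      Finset.card_insert_of_notMem (fun hmem => he (Finset.mem_of_mem_filter _ hmem))]
  · rw [if_neg hv, if_neg hv, add_zero]

lemma holant_ite_mem (u w v : V) (huw : u ≠ w) :
    (if v ∈ s(u,w) then 1 else 0) = (if v = u then 1 else 0) + (if v = w then 1 else 0) := by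
  by_cases h1 : v = u <;> by_cases h2 : v = w
  · exact absurd (h1.symm.trans h2) huw
  · simp [Sym2.mem_iff, h1, h2, huw]
  · simp [Sym2.mem_iff, h1, h2, Ne.symm huw]
  · simp [Sym2.mem_iff, h1, h2]

lemma holantZ_step (f : ℕ → ℂ) (E S : Finset (Sym2 V)) (ζ : Sym2 V → ℂ)
    (x : Sym2 V × V → ℂ) (e : Sym2 V) (u w : V) (he : e = s(u,w)) (huw : u ≠ w)
    (heE : e ∈ E) (heS : e ∉ S) :
    ∃ A B C D : ℂ,
      (∀ s t : ℂ, holantZ f E S ζ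
          (Function.update (Function.update x (e,u) s) (e,w) t) = A + B*s + C*t + D*(s*t))
      ∧ holantZ f E (insert e S) ζ x = A + D * ζ e := by
  obtain ⟨U', hU'⟩ : ∃ U', U' = holantHE (E \ insert e S) := ⟨_, rfl⟩
  have hp12 : ((e,u) : Sym2 V × V) ≠ (e,w) := fun h => huw (congrArg Prod.snd h)
  have hp₁U' : ((e,u) : Sym2 V × V) ∉ U' := by
    rw [hU', holantHE_mem]
    rintro ⟨h1, _⟩
    exact (Finset.mem_sdiff.mp h1).2 (Finset.mem_insert_self e S)
  have hp₂U' : ((e,w) : Sym2 V × V) ∉ U' := by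
    rw [hU', holantHE_mem]
    rintro ⟨h1, _⟩
    exact (Finset.mem_sdiff.mp h1).2 (Finset.mem_insert_self e S)
  have hp₁in : ((e,u) : Sym2 V × V) ∉ insert (e,w) U' := by
    rw [Finset.mem_insert]
    rintro (h | h)
    · exact hp12 h
    · exact hp₁U' h
  have hHEeq : holantHE (E \ S) = insert (e,u) (insert (e,w) U') := by
    ext p
    rw [holantHE_mem]
    simp only [Finset.mem_insert, hU', holantHE_mem, Finset.mem_sdiff]
    constructor
    · rintro ⟨⟨hpE, hpS⟩, hmem⟩
      by_cases hpe : p.1 = e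
      · rw [hpe, he, Sym2.mem_iff] at hmem
        rcases hmem with h | h
        · exact Or.inl (Prod.ext hpe h)
        · exact Or.inr (Or.inl (Prod.ext hpe h))
      · exact Or.inr (Or.inr ⟨⟨hpE, fun hmem' =>
          hmem'.elim hpe hpS⟩, hmem⟩)
    · rintro (rfl | rfl | ⟨⟨hpE, hpS⟩, hmem⟩)
      · exact ⟨⟨heE, heS⟩, by rw [he]; exact Sym2.mem_mk_left u w⟩
      · exact ⟨⟨heE, heS⟩, by rw [he]; exact Sym2.mem_mk_right u w⟩
      · exact ⟨⟨hpE, fun h => hpS (Or.inr h)⟩, hmem⟩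
  obtain ⟨A, hA⟩ : ∃ A : ℂ, A = ∑ σ ∈ S.powerset, ∑ H ∈ U'.powerset,
      (∏ e' ∈ σ, ζ e') * (∏ p ∈ H, x p) *
        ∏ v : V, f ((σ.filter (fun e' => v ∈ e')).card
          + (H.filter (fun p => p.2 = v)).card) := ⟨_, rfl⟩
  obtain ⟨B, hB⟩ : ∃ B : ℂ, B = ∑ σ ∈ S.powerset, ∑ H ∈ U'.powerset,
      (∏ e' ∈ σ, ζ e') * (∏ p ∈ H, x p) *
        ∏ v : V, f ((σ.filter (fun e' => v ∈ e')).card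
          + ((H.filter (fun p => p.2 = v)).card + (if v = u then 1 else 0))) := ⟨_, rfl⟩
  obtain ⟨C, hC⟩ : ∃ C : ℂ, C = ∑ σ ∈ S.powerset, ∑ H ∈ U'.powerset,
      (∏ e' ∈ σ, ζ e') * (∏ p ∈ H, x p) *
        ∏ v : V, f ((σ.filter (fun e' => v ∈ e')).card
          + ((H.filter (fun p => p.2 = v)).card + (if v = w then 1 else 0))) := ⟨_, rfl⟩
  obtain ⟨D, hD⟩ : ∃ D : ℂ, D = ∑ σ ∈ S.powerset, ∑ H ∈ U'.powerset,
      (∏ e' ∈ σ, ζ e') * (∏ p ∈ H, x p) *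
        ∏ v : V, f ((σ.filter (fun e' => v ∈ e')).card
          + (((H.filter (fun p => p.2 = v)).card + (if v = w then 1 else 0))
            + (if v = u then 1 else 0))) := ⟨_, rfl⟩
  refine ⟨A, B, C, D, ?_, ?_⟩
  · -- multiaffine expansion
    intro s t
    obtain ⟨x', hx'⟩ : ∃ x', x' = Function.update (Function.update x (e,u) s) (e,w) t :=
      ⟨_, rfl⟩
    have hx'p₁ : x' (e,u) = s := by
      rw [hx', Function.update_of_ne hp12, Function.update_self]
    have hx'p₂ : x' (e,w) = t := by rw [hx', Function.update_self]
    have hx'other : ∀ p : Sym2 V × V, p ≠ (e,u) → p ≠ (e,w) → x' p = x p := by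
      intro p h1 h2
      rw [hx', Function.update_of_ne h2, Function.update_of_ne h1]
    rw [← hx']
    unfold holantZ
    rw [hHEeq]
    rw [Finset.sum_congr rfl (fun σ _ => Finset.sum_powerset_insert hp₁in _)]
    rw [Finset.sum_congr rfl (fun σ _ =>
      congrArg₂ (· + ·) (Finset.sum_powerset_insert hp₂U' _)
        (Finset.sum_powerset_insert hp₂U' _))]
    simp only [Finset.sum_add_distrib]
    -- now four double sums
    have hmem_facts : ∀ H : Finset (Sym2 V × V), H ∈ U'.powerset →
        (((e,u) : Sym2 V × V) ∉ H ∧ ((e,w) : Sym2 V × V) ∉ H ∧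
          (∏ p ∈ H, x' p) = ∏ p ∈ H, x p) := by
      intro H hH
      have hsub := Finset.mem_powerset.mp hH
      refine ⟨fun h => hp₁U' (hsub h), fun h => hp₂U' (hsub h), ?_⟩
      refine Finset.prod_congr rfl (fun p hp => ?_)
      exact hx'other p (fun h => hp₁U' (hsub (h ▸ hp))) (fun h => hp₂U' (hsub (h ▸ hp)))
    have E1 : ∑ σ ∈ S.powerset, ∑ H ∈ U'.powerset,
        (∏ e' ∈ σ, ζ e') * (∏ p ∈ H, x' p) *
          ∏ v : V, f ((σ.filter (fun e' => v ∈ e')).card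
            + (H.filter (fun p => p.2 = v)).card) = A := by
      rw [hA]
      refine Finset.sum_congr rfl (fun σ _ => Finset.sum_congr rfl (fun H hH => ?_))
      rw [(hmem_facts H hH).2.2]
    have E2 : ∑ σ ∈ S.powerset, ∑ H ∈ U'.powerset,
        (∏ e' ∈ σ, ζ e') * (∏ p ∈ insert (e,w) H, x' p) *
          ∏ v : V, f ((σ.filter (fun e' => v ∈ e')).card
            + ((insert (e,w) H).filter (fun p => p.2 = v)).card) = C * t := by
      rw [hC, Finset.sum_mul]
      refine Finset.sum_congr rfl (fun σ _ => ?_)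
      rw [Finset.sum_mul]
      refine Finset.sum_congr rfl (fun H hH => ?_)
      obtain ⟨h1, h2, h3⟩ := hmem_facts H hH
      rw [Finset.prod_insert h2, hx'p₂, h3]
      have ecard : (∏ v : V, f ((σ.filter (fun e' => v ∈ e')).card
            + ((insert (e,w) H).filter (fun p => p.2 = v)).card))
          = ∏ v : V, f ((σ.filter (fun e' => v ∈ e')).card
            + ((H.filter (fun p => p.2 = v)).card + (if v = w then 1 else 0))) :=
        Finset.prod_congr rfl (fun v _ => by
          rw [holant_card_filter_insert_snd H e w h2 v])
      rw [ecard]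
      ring
    have E3 : ∑ σ ∈ S.powerset, ∑ H ∈ U'.powerset,
        (∏ e' ∈ σ, ζ e') * (∏ p ∈ insert (e,u) H, x' p) *
          ∏ v : V, f ((σ.filter (fun e' => v ∈ e')).card
            + ((insert (e,u) H).filter (fun p => p.2 = v)).card) = B * s := by
      rw [hB, Finset.sum_mul]
      refine Finset.sum_congr rfl (fun σ _ => ?_)
      rw [Finset.sum_mul]
      refine Finset.sum_congr rfl (fun H hH => ?_)
      obtain ⟨h1, h2, h3⟩ := hmem_facts H hH
      rw [Finset.prod_insert h1, hx'p₁, h3]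
      have ecard : (∏ v : V, f ((σ.filter (fun e' => v ∈ e')).card
            + ((insert (e,u) H).filter (fun p => p.2 = v)).card))
          = ∏ v : V, f ((σ.filter (fun e' => v ∈ e')).card
            + ((H.filter (fun p => p.2 = v)).card + (if v = u then 1 else 0))) :=
        Finset.prod_congr rfl (fun v _ => by
          rw [holant_card_filter_insert_snd H e u h1 v])
      rw [ecard]
      ring
    have E4 : ∑ σ ∈ S.powerset, ∑ H ∈ U'.powerset,
        (∏ e' ∈ σ, ζ e') * (∏ p ∈ insert (e,u) (insert (e,w) H), x' p) *
          ∏ v : V, f ((σ.filter (fun e' => v ∈ e')).card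
            + ((insert (e,u) (insert (e,w) H)).filter (fun p => p.2 = v)).card)
        = D * (s * t) := by
      rw [hD, Finset.sum_mul]
      refine Finset.sum_congr rfl (fun σ _ => ?_)
      rw [Finset.sum_mul]
      refine Finset.sum_congr rfl (fun H hH => ?_)
      obtain ⟨h1, h2, h3⟩ := hmem_facts H hH
      have h4 : ((e,u) : Sym2 V × V) ∉ insert (e,w) H := by
        rw [Finset.mem_insert]
        rintro (h | h)
        · exact hp12 h
        · exact h1 h
      rw [Finset.prod_insert h4, Finset.prod_insert h2, hx'p₁, hx'p₂, h3]
      have ecard : (∏ v : V, f ((σ.filter (fun e' => v ∈ e')).card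
            + ((insert (e,u) (insert (e,w) H)).filter (fun p => p.2 = v)).card))
          = ∏ v : V, f ((σ.filter (fun e' => v ∈ e')).card
            + (((H.filter (fun p => p.2 = v)).card + (if v = w then 1 else 0))
              + (if v = u then 1 else 0))) :=
        Finset.prod_congr rfl (fun v _ => by
          rw [holant_card_filter_insert_snd _ e u h4 v,
            holant_card_filter_insert_snd H e w h2 v])
      rw [ecard]
      ring
    rw [E1, E2, E3, E4]
    ring
  · -- contraction identity
    unfold holantZ
    rw [← hU']
    rw [Finset.sum_powerset_insert heS]
    have ED : ∑ σ ∈ S.powerset, ∑ H ∈ U'.powerset,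
        (∏ e' ∈ insert e σ, ζ e') * (∏ p ∈ H, x p) *
          ∏ v : V, f (((insert e σ).filter (fun e' => v ∈ e')).card
            + (H.filter (fun p => p.2 = v)).card) = D * ζ e := by
      rw [hD, Finset.sum_mul]
      refine Finset.sum_congr rfl (fun σ hσ => ?_)
      have heσ : e ∉ σ := fun h => heS (Finset.mem_powerset.mp hσ h)
      rw [Finset.sum_mul]
      refine Finset.sum_congr rfl (fun H _ => ?_)
      rw [Finset.prod_insert heσ]
      have hite : ∀ v : V, (if v ∈ e then 1 else 0) = (if v = u then 1 else 0)
          + (if v = w then 1 else 0) := fun v => by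
        rw [he]; exact holant_ite_mem u w v huw
      have ecard : (∏ v : V, f (((insert e σ).filter (fun e' => v ∈ e')).card
            + (H.filter (fun p => p.2 = v)).card))
          = ∏ v : V, f ((σ.filter (fun e' => v ∈ e')).card
            + (((H.filter (fun p => p.2 = v)).card + (if v = w then 1 else 0))
              + (if v = u then 1 else 0))) :=
        Finset.prod_congr rfl (fun v _ => by
          rw [holant_card_filter_insert_edge σ e heσ v]
          congr 1
          rw [hite v]
          ring)
      rw [ecard]
      ring
    rw [ED, hA]

end Step

section Main

variable {V : Type} [Fintype V] [DecidableEq V]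

lemma holant_fiber_card (G : SimpleGraph V) [DecidableRel G.Adj] (v : V) (Δ : ℕ)
    (hreg : G.IsRegularOfDegree Δ) :
    (((holantHE G.edgeFinset).filter (fun p => p.2 = v))).card = Δ := by
  have himg : (holantHE G.edgeFinset).filter (fun p => p.2 = v)
      = (G.edgeFinset.filter (fun e => v ∈ e)).image (fun e => (e, v)) := by
    ext p
    simp only [Finset.mem_filter, holantHE_mem, Finset.mem_image]
    constructor
    · rintro ⟨⟨h1, h2⟩, h3⟩
      exact ⟨p.1, ⟨h1, h3 ▸ h2⟩, by rw [← h3]⟩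
    · rintro ⟨e, ⟨h1, h2⟩, rfl⟩
      exact ⟨⟨h1, h2⟩, rfl⟩
  rw [himg, Finset.card_image_of_injective _ (fun a b h => congrArg Prod.fst h)]
  have : G.edgeFinset.filter (fun e => v ∈ e) = G.incidenceFinset v :=
    (SimpleGraph.incidenceFinset_eq_filter G v).symm
  rw [this, SimpleGraph.card_incidenceFinset_eq_degree]
  exact hreg v

lemma holant_invariant (Δ : ℕ) (hΔ : 1 ≤ Δ) (f : ℕ → ℂ) (ε : ℝ) (hε : 0 < ε)
    (hstable : ∀ z : ℂ, -ε ≤ z.re →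
      ∑ i ∈ Finset.range (Δ + 1), (Δ.choose i : ℂ) * f i * z ^ i ≠ 0)
    (G : SimpleGraph V) [DecidableRel G.Adj]
    (hreg : G.IsRegularOfDegree Δ) :
    ∀ S : Finset (Sym2 V), S ⊆ G.edgeFinset → ∀ (ζ : Sym2 V → ℂ) (x : Sym2 V × V → ℂ),
      (∀ e ∈ S, |(ζ e).im| ≤ ε^2/2 ∧ -(ε^2/2) ≤ (ζ e).re ∧ (ζ e).re ≤ 1 + ε^2/2) →
      (∀ p : Sym2 V × V, -ε < (x p).re) →
      holantZ f G.edgeFinset S ζ x ≠ 0 := by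
  intro S
  induction S using Finset.induction_on with
  | empty =>
    intro _ ζ x _ hx
    rw [holantZ_empty]
    rw [Finset.prod_ne_zero_iff]
    intro v _
    exact holant_gws ε hε Δ f hstable _ x (holant_fiber_card G v Δ hreg)
      (fun p _ => (hx p).le)
  | @insert e S' heS' ih =>
    intro hsub ζ x hζ hx
    have heE : e ∈ G.edgeFinset := hsub (Finset.mem_insert_self e S')
    have hS'E : S' ⊆ G.edgeFinset := (Finset.subset_insert e S').trans hsub
    obtain ⟨u, w, he⟩ : ∃ u w, e = s(u,w) := Sym2.ind (fun u w => ⟨u, w, rfl⟩) e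
    have hadj : G.Adj u w := by
      rw [← SimpleGraph.mem_edgeSet, ← he]
      exact SimpleGraph.mem_edgeFinset.mp heE
    have huw : u ≠ w := hadj.ne
    obtain ⟨A, B, C, D, hmul, hcontr⟩ :=
      holantZ_step f G.edgeFinset S' ζ x e u w he huw heE heS'
    rw [hcontr]
    obtain ⟨h1, h2, h3⟩ := hζ e (Finset.mem_insert_self e S')
    rw [show A + D * ζ e = A + D * ζ e from rfl]
    apply holant_asano ε hε A B C D ?_ (ζ e) h1 h2 h3
    intro s t hs ht
    rw [← hmul s t]
    apply ih hS'E ζ _ (fun e' he' => hζ e' (Finset.mem_insert_of_mem he'))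
    intro p
    by_cases hpw : p = (e, w)
    · rw [hpw, Function.update_self]; exact ht
    · rw [Function.update_of_ne hpw]
      by_cases hpu : p = (e, u)
      · rw [hpu, Function.update_self]; exact hs
      · rw [Function.update_of_ne hpu]; exact hx p

end Main


/-- **Ruelle's method for Holant problems.** If the local polynomial
`P_f(z) = ∑ C(Δ,i) f_i z^i` of a signature `f` of arity `Δ` is `H_ε`-stable,
then for every finite `Δ`-regular graph `G` the Holant polynomial
`P_G(z) = ∑_k Z_k(G;f) z^k` has no zero in the `δ`-strip of `[0,1]` with `δ = ε²/2`. -/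
theorem holant_polynomial_zero_free (Δ : ℕ) (hΔ : 1 ≤ Δ) (f : ℕ → ℂ) (ε : ℝ) (hε : 0 < ε)
    (hstable : ∀ z : ℂ, -ε ≤ z.re →
      ∑ i ∈ Finset.range (Δ + 1), (Δ.choose i : ℂ) * f i * z ^ i ≠ 0)
    (V : Type) [Fintype V] [DecidableEq V] (G : SimpleGraph V) [DecidableRel G.Adj]
    (hreg : G.IsRegularOfDegree Δ)
    (z : ℂ) (him : |z.im| ≤ ε ^ 2 / 2) (hre₁ : -(ε ^ 2 / 2) ≤ z.re)
    (hre₂ : z.re ≤ 1 + ε ^ 2 / 2) :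
    ∑ k ∈ Finset.range (G.edgeFinset.card + 1),
        (∑ σ ∈ G.edgeFinset.powerset.filter (fun σ => σ.card = k),
          ∏ v : V, f ((σ.filter (fun e => v ∈ e)).card)) * z ^ k ≠ 0 := by
  have hinv := holant_invariant Δ hΔ f ε hε hstable G hreg G.edgeFinset
    (subset_refl _) (fun _ => z) (fun _ => 0)
    (fun e _ => ⟨him, hre₁, hre₂⟩)
    (fun p => by rw [Complex.zero_re]; linarith)
  rw [holantZ_full] at hinv
  have heq : ∑ k ∈ Finset.range (G.edgeFinset.card + 1),
      (∑ σ ∈ G.edgeFinset.powerset.filter (fun σ => σ.card = k),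
        ∏ v : V, f ((σ.filter (fun e => v ∈ e)).card)) * z ^ k
      = ∑ σ ∈ G.edgeFinset.powerset,
          (∏ _e ∈ σ, z) * ∏ v : V, f ((σ.filter (fun e => v ∈ e)).card) := by
    rw [← Finset.sum_fiberwise_of_maps_to (g := fun σ : Finset (Sym2 V) => σ.card)
      (t := Finset.range (G.edgeFinset.card + 1))
      (fun σ hσ => Finset.mem_range.mpr (Nat.lt_succ_of_le
        (Finset.card_le_card (Finset.mem_powerset.mp hσ))))]
    refine Finset.sum_congr rfl (fun k _ => ?_)
    rw [Finset.sum_mul]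
    refine Finset.sum_congr rfl (fun σ hσ => ?_)
    have hcard : σ.card = k := (Finset.mem_filter.mp hσ).2
    rw [Finset.prod_const, hcard]
    ring
  rw [heq]
  exact hinv
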